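/- arXiv:1510.03395 — 5 statements merged into one kernel-verified Lean document; each statement's English description precedes it below -/
import Mathlib

section
/- In an inverse semiloopoid G over M, for every g ∈ G the pairs (g⁻¹, g) and (g, g⁻¹) are composable and g⁻¹g = β(g) and gg⁻¹ = α(g). -/
/-- A semiloopoid over a set of units `M ⊆ G`: maps `α, β : G → M ⊆ G` fixing
units, a set `G₂` of composable pairs, and a partial multiplication `m : G₂ → G`
such that `α(g)g = g`, `gβ(g) = g`, and all left and right translations are
injective on their domains. -/
structure Semiloopoid (G : Type*) where
  M : Set G
  α : G → G
  β : G → G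
  α_mem : ∀ g : G, α g ∈ M
  β_mem : ∀ g : G, β g ∈ M
  α_unit : ∀ u ∈ M, α u = u
  β_unit : ∀ u ∈ M, β u = u
  G₂ : Set (G × G)
  mul : (g : G) → (h : G) → (g, h) ∈ G₂ → G
  unit_left_comp : ∀ g : G, (α g, g) ∈ G₂
  unit_left : ∀ g : G, mul (α g) g (unit_left_comp g) = g
  unit_right_comp : ∀ g : G, (g, β g) ∈ G₂
  unit_right : ∀ g : G, mul g (β g) (unit_right_comp g) = g
  left_inj : ∀ (g h h' : G) (p : (g, h) ∈ G₂) (p' : (g, h') ∈ G₂),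
    mul g h p = mul g h' p' → h = h'
  right_inj : ∀ (g h h' : G) (p : (h, g) ∈ G₂) (p' : (h', g) ∈ G₂),
    mul h g p = mul h' g p' → h = h'

/-- An inverse semiloopoid: a semiloopoid with an inversion `ι(g) = g⁻¹` such
that whenever `(g,h) ∈ G₂` also `(g⁻¹, gh) ∈ G₂` with `g⁻¹(gh) = h`, and
whenever `(u,g) ∈ G₂` also `(ug, g⁻¹) ∈ G₂` with `(ug)g⁻¹ = u`. -/
structure InverseSemiloopoid (G : Type*) extends Semiloopoid G where
  inv : G → G
  inv_left_comp : ∀ (g h : G) (p : (g, h) ∈ G₂), (inv g, mul g h p) ∈ G₂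
  inv_left : ∀ (g h : G) (p : (g, h) ∈ G₂),
    mul (inv g) (mul g h p) (inv_left_comp g h p) = h
  inv_right_comp : ∀ (u g : G) (p : (u, g) ∈ G₂), (mul u g p, inv g) ∈ G₂
  inv_right : ∀ (u g : G) (p : (u, g) ∈ G₂),
    mul (mul u g p) (inv g) (inv_right_comp u g p) = u

theorem Semiloopoid.mul_congr_right {G : Type*} (S : Semiloopoid G) {g h h' : G}
    (e : h = h') (p : (g, h) ∈ S.G₂) :
    ∃ p' : (g, h') ∈ S.G₂, S.mul g h p = S.mul g h' p' := by
  subst e; exact ⟨p, rfl⟩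

theorem Semiloopoid.mul_congr_left {G : Type*} (S : Semiloopoid G) {g h h' : G}
    (e : h = h') (p : (h, g) ∈ S.G₂) :
    ∃ p' : (h', g) ∈ S.G₂, S.mul h g p = S.mul h' g p' := by
  subst e; exact ⟨p, rfl⟩

/-- In an inverse semiloopoid `G` over `M`, for every `g ∈ G` the pairs
`(g⁻¹, g)` and `(g, g⁻¹)` are composable, with `g⁻¹g = β(g)` and `gg⁻¹ = α(g)`. -/
theorem inverseSemiloopoid_inv_mul_and_mul_inv {G : Type*}
    (S : InverseSemiloopoid G) (g : G) :
    ∃ (p : (S.inv g, g) ∈ S.G₂) (q : (g, S.inv g) ∈ S.G₂),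
      S.mul (S.inv g) g p = S.β g ∧ S.mul g (S.inv g) q = S.α g := by
  have p0 := S.inv_left_comp g (S.β g) (S.unit_right_comp g)
  have e0 := S.inv_left g (S.β g) (S.unit_right_comp g)
  have q0 := S.inv_right_comp (S.α g) g (S.unit_left_comp g)
  have f0 := S.inv_right (S.α g) g (S.unit_left_comp g)
  have hg : S.mul g (S.β g) (S.unit_right_comp g) = g := S.unit_right g
  have hg' : S.mul (S.α g) g (S.unit_left_comp g) = g := S.unit_left g
  obtain ⟨p, hp⟩ := S.toSemiloopoid.mul_congr_right hg p0
  obtain ⟨q, hq⟩ := S.toSemiloopoid.mul_congr_left hg' q0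
  exact ⟨p, q, hp ▸ e0, hq ▸ f0⟩
end

section
/- In an inverse semiloopoid G over M, the inversion is involutive: (g⁻¹)⁻¹ = g for every g ∈ G. -/
/-- In an inverse semiloopoid `G` over `M`, the inversion is involutive:
`(g⁻¹)⁻¹ = g` for every `g ∈ G`. -/
theorem inverseSemiloopoid_inv_inv {G : Type*}
    (S : InverseSemiloopoid G) (g : G) :
    S.inv (S.inv g) = g := by
  have p1 := S.unit_left_comp g
  have h1 : S.mul (S.α g) g p1 = g := S.unit_left g
  have p2 := S.inv_right_comp (S.α g) g p1
  have h2 := S.inv_right (S.α g) g p1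
  simp only [h1] at p2 h2
  have p3 := S.inv_right_comp g (S.inv g) p2
  have h3 := S.inv_right g (S.inv g) p2
  simp only [h2] at p3 h3
  exact S.left_inj (S.α g) (S.inv (S.inv g)) g p3 p1 (h3.trans h1.symm)
end

section
/- In an inverse semiloopoid G over M, for every composable pair (g,h) ∈ G₂ the pair (h⁻¹, g⁻¹) is composable and (gh)⁻¹ = h⁻¹g⁻¹. -/
/-- In an inverse semiloopoid `G` over `M`, for every composable pair
`(g,h) ∈ G₂` the pair `(h⁻¹, g⁻¹)` is composable and `(gh)⁻¹ = h⁻¹g⁻¹`. -/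
theorem inverseSemiloopoid_mul_inv_rev {G : Type*}
    (S : InverseSemiloopoid G) (g h : G) (p : (g, h) ∈ S.G₂) :
    ∃ q : (S.inv h, S.inv g) ∈ S.G₂,
      S.inv (S.mul g h p) = S.mul (S.inv h) (S.inv g) q := by
  have hcong : ∀ (a a' b b' : G) (_ : a = a') (_ : b = b')
      (pa : (a, b) ∈ S.G₂) (pa' : (a', b') ∈ S.G₂),
      S.mul a b pa = S.mul a' b' pa' := by
    intro a a' b b' ha hb pa pa'
    subst ha; subst hb; rfl
  -- k := S.mul g h p
  have p1 := S.inv_left_comp g h p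
  have e1 : S.mul (S.inv g) (S.mul g h p) p1 = h := S.inv_left g h p
  have p2 := S.inv_right_comp (S.inv g) (S.mul g h p) p1
  have p2' : (h, S.inv (S.mul g h p)) ∈ S.G₂ := by rw [e1] at p2; exact p2
  have e2 := S.inv_right (S.inv g) (S.mul g h p) p1
  have e2' : S.mul h (S.inv (S.mul g h p)) p2' = S.inv g :=
    (hcong _ _ _ _ e1.symm rfl p2' p2).trans e2
  have p3 := S.inv_left_comp h (S.inv (S.mul g h p)) p2'
  have q : (S.inv h, S.inv g) ∈ S.G₂ := by
    have := p3; rw [e2'] at this; exact this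
  refine ⟨q, ?_⟩
  have e3 := S.inv_left h (S.inv (S.mul g h p)) p2'
  rw [← e3]
  exact hcong _ _ _ _ rfl e2' p3 q
end

section
/- If a semiloopoid G over M satisfies the unities associativity condition, then for every composable pair (g,h) ∈ G₂ one has β(g) = α(h), α(gh) = α(g), and β(gh) = β(h); in particular the anchor map (α,β) : G → M×M respects the multiplication of the pair groupoid M×M. -/
/-- The unities associativity condition for a semiloopoid: for all `x, y, z ∈ G`
with at least one of them a unit, `(xy)z` is defined iff `x(yz)` is defined, and
then the two products coincide. -/
def Semiloopoid.UnitiesAssoc {G : Type*} (S : Semiloopoid G) : Prop :=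
  ∀ x y z : G, (x ∈ S.M ∨ y ∈ S.M ∨ z ∈ S.M) →
    ((∃ p : (x, y) ∈ S.G₂, (S.mul x y p, z) ∈ S.G₂) ↔
      (∃ q : (y, z) ∈ S.G₂, (x, S.mul y z q) ∈ S.G₂)) ∧
    ∀ (p : (x, y) ∈ S.G₂) (p' : (S.mul x y p, z) ∈ S.G₂)
      (q : (y, z) ∈ S.G₂) (q' : (x, S.mul y z q) ∈ S.G₂),
      S.mul (S.mul x y p) z p' = S.mul x (S.mul y z q) q'

private lemma Semiloopoid.mul_congr {G : Type*} (S : Semiloopoid G) {g g' h h' : G}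
    (eg : g = g') (eh : h = h') (p : (g, h) ∈ S.G₂) (p' : (g', h') ∈ S.G₂) :
    S.mul g h p = S.mul g' h' p' := by subst eg; subst eh; rfl

/-- If a semiloopoid `G` over `M` satisfies the unities associativity condition,
then for every composable pair `(g,h) ∈ G₂` one has `β(g) = α(h)`,
`α(gh) = α(g)` and `β(gh) = β(h)`; in particular the anchor map
`(α,β) : G → M×M` respects the multiplication of the pair groupoid `M×M`. -/
theorem semiloopoid_unitiesAssoc_anchor {G : Type*} (S : Semiloopoid G)
    (hua : S.UnitiesAssoc) :
    ∀ (g h : G) (p : (g, h) ∈ S.G₂),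
      S.β g = S.α h ∧ S.α (S.mul g h p) = S.α g ∧ S.β (S.mul g h p) = S.β h := by
  intro g h p
  -- β g = α h
  have hβα : S.β g = S.α h := by
    obtain ⟨iff1, assoc1⟩ := hua g (S.β g) h (Or.inr (Or.inl (S.β_mem g)))
    have pc : (S.mul g (S.β g) (S.unit_right_comp g), h) ∈ S.G₂ := by
      rw [S.unit_right]; exact p
    obtain ⟨q, q'⟩ := iff1.mp ⟨S.unit_right_comp g, pc⟩
    have e := assoc1 (S.unit_right_comp g) pc q q'
    have e2 : S.mul g h p = S.mul g (S.mul (S.β g) h q) q' := by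
      rw [← e]; exact S.mul_congr (S.unit_right g).symm rfl p pc
    have e3 : h = S.mul (S.β g) h q := S.left_inj g h _ p q' e2
    have e4 : S.mul (S.α h) h (S.unit_left_comp h) = S.mul (S.β g) h q := by
      rw [S.unit_left]; exact e3
    exact (S.right_inj h (S.α h) (S.β g) _ _ e4).symm
  refine ⟨hβα, ?_, ?_⟩
  · -- α (gh) = α g
    obtain ⟨iff1, assoc1⟩ := hua (S.α g) g h (Or.inl (S.α_mem g))
    have pc : (S.mul (S.α g) g (S.unit_left_comp g), h) ∈ S.G₂ := by
      rw [S.unit_left]; exact p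
    obtain ⟨q, q'⟩ := iff1.mp ⟨S.unit_left_comp g, pc⟩
    have e := assoc1 (S.unit_left_comp g) pc q q'
    have e2 : S.mul g h p = S.mul (S.α g) (S.mul g h q) q' := by
      rw [← e]; exact S.mul_congr (S.unit_left g).symm rfl p pc
    have e3 : S.mul g h p = S.mul (S.α g) (S.mul g h p) q' := e2
    have e4 : S.mul (S.α (S.mul g h p)) (S.mul g h p) (S.unit_left_comp _)
        = S.mul (S.α g) (S.mul g h p) q' := by
      rw [S.unit_left]; exact e3
    exact S.right_inj (S.mul g h p) _ _ _ _ e4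
  · -- β (gh) = β h
    obtain ⟨iff1, assoc1⟩ := hua g h (S.β h) (Or.inr (Or.inr (S.β_mem h)))
    have qc : (g, S.mul h (S.β h) (S.unit_right_comp h)) ∈ S.G₂ := by
      rw [S.unit_right]; exact p
    obtain ⟨q, q'⟩ := iff1.mpr ⟨S.unit_right_comp h, qc⟩
    have e := assoc1 q q' (S.unit_right_comp h) qc
    have e2 : S.mul (S.mul g h p) (S.β h) q' = S.mul g h p :=
      e.trans (S.mul_congr rfl (S.unit_right h) qc p)
    have e4 : S.mul (S.mul g h p) (S.β h) q' =
        S.mul (S.mul g h p) (S.β (S.mul g h p)) (S.unit_right_comp _) := by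
      rw [S.unit_right]; exact e2
    exact (S.left_inj (S.mul g h p) _ _ _ _ e4).symm
end

section
/- If a semiloopoid G over M satisfies G₂ = {(g,h) ∈ G×G : β(g) = α(h)} and α(gh) = α(g) and β(gh) = β(h) for all (g,h) ∈ G₂, then G satisfies the unities associativity condition: for all g, h ∈ G and e ∈ M, each of the products e(gh) = (eg)h, (ge)h = g(eh), and (gh)e = g(he) holds in the sense that if one side is defined then so is the other and they are equal. -/
section Helpers
variable {G : Type*} (S : Semiloopoid G)

theorem sl_mul_congr_left {g g' h : G} (e : g = g') (p : (g, h) ∈ S.G₂)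
    (p' : (g', h) ∈ S.G₂) : S.mul g h p = S.mul g' h p' := by subst e; rfl

theorem sl_mul_congr_right {g h h' : G} (e : h = h') (p : (g, h) ∈ S.G₂)
    (p' : (g, h') ∈ S.G₂) : S.mul g h p = S.mul g h' p' := by subst e; rfl

theorem sl_unit_mul (hG₂ : ∀ g h : G, (g, h) ∈ S.G₂ ↔ S.β g = S.α h)
    {e g : G} (he : e ∈ S.M) (q : (e, g) ∈ S.G₂) : S.mul e g q = g := by
  have h1 : e = S.α g := by rw [← S.β_unit e he]; exact (hG₂ e g).mp q
  subst h1
  exact S.unit_left g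

theorem sl_mul_unit (hG₂ : ∀ g h : G, (g, h) ∈ S.G₂ ↔ S.β g = S.α h)
    {g e : G} (he : e ∈ S.M) (q : (g, e) ∈ S.G₂) : S.mul g e q = g := by
  have h1 : e = S.β g := by rw [← S.α_unit e he]; exact ((hG₂ g e).mp q).symm
  subst h1
  exact S.unit_right g

end Helpers

/-- If a semiloopoid `G` over `M` satisfies `G₂ = {(g,h) : β(g) = α(h)}`,
`α(gh) = α(g)` and `β(gh) = β(h)`, then it satisfies the unities associativity
condition: for all `g, h ∈ G` and every unit `e ∈ M`, each of
`e(gh) = (eg)h`, `(ge)h = g(eh)` and `(gh)e = g(he)` holds in the sense that if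
one side is defined then so is the other and they are equal. -/

theorem semiloopoid_anchor_unitiesAssoc {G : Type*} (S : Semiloopoid G)
    (hG₂ : ∀ g h : G, (g, h) ∈ S.G₂ ↔ S.β g = S.α h)
    (hα : ∀ (g h : G) (p : (g, h) ∈ S.G₂), S.α (S.mul g h p) = S.α g)
    (hβ : ∀ (g h : G) (p : (g, h) ∈ S.G₂), S.β (S.mul g h p) = S.β h) :
    ∀ (g h : G), ∀ e ∈ S.M,
      -- e(gh) = (eg)h
      (((∃ p : (g, h) ∈ S.G₂, (e, S.mul g h p) ∈ S.G₂) ↔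
          (∃ q : (e, g) ∈ S.G₂, (S.mul e g q, h) ∈ S.G₂)) ∧
        ∀ (p : (g, h) ∈ S.G₂) (p' : (e, S.mul g h p) ∈ S.G₂)
          (q : (e, g) ∈ S.G₂) (q' : (S.mul e g q, h) ∈ S.G₂),
          S.mul e (S.mul g h p) p' = S.mul (S.mul e g q) h q') ∧
      -- (ge)h = g(eh)
      (((∃ p : (g, e) ∈ S.G₂, (S.mul g e p, h) ∈ S.G₂) ↔
          (∃ q : (e, h) ∈ S.G₂, (g, S.mul e h q) ∈ S.G₂)) ∧
        ∀ (p : (g, e) ∈ S.G₂) (p' : (S.mul g e p, h) ∈ S.G₂)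
          (q : (e, h) ∈ S.G₂) (q' : (g, S.mul e h q) ∈ S.G₂),
          S.mul (S.mul g e p) h p' = S.mul g (S.mul e h q) q') ∧
      -- (gh)e = g(he)
      (((∃ p : (g, h) ∈ S.G₂, (S.mul g h p, e) ∈ S.G₂) ↔
          (∃ q : (h, e) ∈ S.G₂, (g, S.mul h e q) ∈ S.G₂)) ∧
        ∀ (p : (g, h) ∈ S.G₂) (p' : (S.mul g h p, e) ∈ S.G₂)
          (q : (h, e) ∈ S.G₂) (q' : (g, S.mul h e q) ∈ S.G₂),
          S.mul (S.mul g h p) e p' = S.mul g (S.mul h e q) q') := by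
  intro g h e he
  have hcomp := hG₂
  refine ⟨⟨?_, ?_⟩, ⟨?_, ?_⟩, ⟨?_, ?_⟩⟩
  · constructor
    · rintro ⟨p, p'⟩
      have hq : (e, g) ∈ S.G₂ := by
        rw [hG₂] at p' ⊢; rw [p', hα g h p]
      refine ⟨hq, ?_⟩
      rw [sl_unit_mul S hG₂ he hq]; exact p
    · rintro ⟨q, q'⟩
      have hp : (g, h) ∈ S.G₂ := by
        rw [← sl_unit_mul S hG₂ he q]; exact q'
      refine ⟨hp, ?_⟩
      rw [hG₂]; rw [S.β_unit e he]
      rw [hα g h hp]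
      rw [← S.β_unit e he]; exact (hG₂ e g).mp q
  · intro p p' q q'
    rw [sl_unit_mul S hG₂ he p']
    exact sl_mul_congr_left S (sl_unit_mul S hG₂ he q).symm _ _
  · constructor
    · rintro ⟨p, p'⟩
      have hq : (e, h) ∈ S.G₂ := by
        rw [hG₂] at p' ⊢
        rw [hβ g e p, S.β_unit e he] at p'
        rw [S.β_unit e he]; exact p'
      refine ⟨hq, ?_⟩
      rw [sl_unit_mul S hG₂ he hq]
      rw [← sl_mul_unit S hG₂ he p]; exact p'
    · rintro ⟨q, q'⟩
      have hp : (g, e) ∈ S.G₂ := by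
        rw [hG₂, S.α_unit e he]
        rw [hG₂] at q'
        rw [hα e h q, S.α_unit e he] at q'
        exact q'
      refine ⟨hp, ?_⟩
      rw [sl_mul_unit S hG₂ he hp]
      rw [← sl_unit_mul S hG₂ he q]; exact q'
  · intro p p' q q'
    have h1 : (g, h) ∈ S.G₂ := by
      rw [← sl_mul_unit S hG₂ he p]; exact p'
    calc S.mul (S.mul g e p) h p' = S.mul g h h1 :=
          sl_mul_congr_left S (sl_mul_unit S hG₂ he p) _ _
      _ = S.mul g (S.mul e h q) q' :=
          sl_mul_congr_right S (sl_unit_mul S hG₂ he q).symm _ _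
  · constructor
    · rintro ⟨p, p'⟩
      have hq : (h, e) ∈ S.G₂ := by
        rw [hG₂] at p' ⊢; rw [← p', hβ g h p]
      refine ⟨hq, ?_⟩
      rw [sl_mul_unit S hG₂ he hq]; exact p
    · rintro ⟨q, q'⟩
      have hp : (g, h) ∈ S.G₂ := by
        rw [← sl_mul_unit S hG₂ he q]; exact q'
      refine ⟨hp, ?_⟩
      rw [hG₂, hβ g h hp, S.α_unit e he, ← S.α_unit e he]
      exact (hG₂ h e).mp q
  · intro p p' q q'
    rw [sl_mul_unit S hG₂ he p']
    exact sl_mul_congr_right S (sl_mul_unit S hG₂ he q).symm _ _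
end
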